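/- Let ι be an index type and, for each i ∈ ι, let I i ⊆ ℝ be a nonempty preconnected set (an interval), with the sets I i pairwise disjoint. Let D = ⋃ i, I i and assume that every point p ∈ I i has a neighborhood U with D ∩ U = I i ∩ U (the intervals are separated in D). If f : ℝ → ℝ is continuous on D, then there exists a function F : ℝ → ℝ that is a primitive of f on D. -/

import Mathlib

open Set intervalIntegral MeasureTheory Filter Topology

lemma hasDerivWithinAt_of_subsingleton {F : ℝ → ℝ} {c x : ℝ} {s : Set ℝ}
    (hs : s ⊆ {x}) : HasDerivWithinAt F c s x := by
  apply HasFDerivWithinAt.of_not_accPt; rw [accPt_principal_iff_nhdsWithin, not_neBot]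
  have : s \ {x} = ∅ := by
    ext u; simp only [mem_diff, mem_singleton_iff, mem_empty_iff_false, iff_false, not_and,
      not_not]
    exact fun hu => hs hu
  rw [this, nhdsWithin_empty]

lemma primitive_right {s : Set ℝ} (hs : s.OrdConnected) {f : ℝ → ℝ}
    (hf : ContinuousOn f s) {a x : ℝ} (ha : a ∈ s) (hx : x ∈ s) :
    HasDerivWithinAt (fun u => ∫ t in a..u, f t) (f x) (s ∩ Ici x) x := by
  by_cases hd : ∃ d ∈ s, x < d
  · obtain ⟨d, hds, hxd⟩ := hd
    set g : ℝ → ℝ := fun u => f (max x (min u d)) with hg_def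
    have hmaps : ∀ u, max x (min u d) ∈ s := fun u =>
      hs.out hx hds ⟨le_max_left _ _, max_le hxd.le (min_le_right _ _)⟩
    have hg : Continuous g :=
      hf.comp_continuous (continuous_const.max (continuous_id.min continuous_const)) hmaps
    have hgx : g x = f x := by simp [hg_def, min_eq_left hxd.le]
    have hH : HasDerivWithinAt (fun u => ∫ t in x..u, g t) (g x) (Ici x) x :=
      integral_hasDerivWithinAt_right (hg.intervalIntegrable _ _)
        (hg.stronglyMeasurable.stronglyMeasurableAtFilter) hg.continuousWithinAt
    have hH' : HasDerivWithinAt (fun u => (∫ t in a..x, f t) + ∫ t in x..u, g t) (f x)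
        (s ∩ Ici x) x := by
      rw [← hgx]
      exact (hH.const_add _).mono inter_subset_right
    refine HasDerivWithinAt.congr_of_eventuallyEq_of_mem hH' ?_ ⟨hx, le_refl x⟩
    have hIic : Iic d ∈ 𝓝[s ∩ Ici x] x := nhdsWithin_le_nhds (Iic_mem_nhds hxd)
    filter_upwards [self_mem_nhdsWithin, hIic] with u hu hud
    obtain ⟨hus, hxu⟩ := hu
    have h1 : IntervalIntegrable f volume a x :=
      (hf.mono (hs.uIcc_subset ha hx)).intervalIntegrable
    have h2 : IntervalIntegrable f volume x u :=
      (hf.mono (hs.uIcc_subset hx hus)).intervalIntegrable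
    have hsplit : (∫ t in a..u, f t) = (∫ t in a..x, f t) + ∫ t in x..u, f t :=
      (integral_add_adjacent_intervals h1 h2).symm
    have hcongr : (∫ t in x..u, f t) = ∫ t in x..u, g t := by
      apply integral_congr
      intro t ht
      rw [uIcc_of_le hxu] at ht
      have : max x (min t d) = t := by
        rw [min_eq_left (ht.2.trans hud), max_eq_right ht.1]
      simp [hg_def, this]
    rw [hsplit, hcongr]
  · push_neg at hd
    exact hasDerivWithinAt_of_subsingleton
      (fun u ⟨hus, hxu⟩ => le_antisymm (hd u hus) hxu)

lemma primitive_left {s : Set ℝ} (hs : s.OrdConnected) {f : ℝ → ℝ}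
    (hf : ContinuousOn f s) {a x : ℝ} (ha : a ∈ s) (hx : x ∈ s) :
    HasDerivWithinAt (fun u => ∫ t in a..u, f t) (f x) (s ∩ Iic x) x := by
  by_cases hd : ∃ c ∈ s, c < x
  · obtain ⟨c, hcs, hcx⟩ := hd
    set g : ℝ → ℝ := fun u => f (min x (max u c)) with hg_def
    have hmaps : ∀ u, min x (max u c) ∈ s := fun u =>
      hs.out hcs hx ⟨le_min hcx.le (le_max_right _ _), min_le_left _ _⟩
    have hg : Continuous g :=
      hf.comp_continuous (continuous_const.min (continuous_id.max continuous_const)) hmaps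
    have hgx : g x = f x := by simp [hg_def, max_eq_left hcx.le]
    have hH : HasDerivWithinAt (fun u => ∫ t in x..u, g t) (g x) (Iic x) x :=
      integral_hasDerivWithinAt_right (hg.intervalIntegrable _ _)
        (hg.stronglyMeasurable.stronglyMeasurableAtFilter) hg.continuousWithinAt
    have hH' : HasDerivWithinAt (fun u => (∫ t in a..x, f t) + ∫ t in x..u, g t) (f x)
        (s ∩ Iic x) x := by
      rw [← hgx]
      exact (hH.const_add _).mono inter_subset_right
    refine HasDerivWithinAt.congr_of_eventuallyEq_of_mem hH' ?_ ⟨hx, le_refl x⟩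
    have hIci : Ici c ∈ 𝓝[s ∩ Iic x] x := nhdsWithin_le_nhds (Ici_mem_nhds hcx)
    filter_upwards [self_mem_nhdsWithin, hIci] with u hu huc
    obtain ⟨hus, hxu⟩ := hu
    have h1 : IntervalIntegrable f volume a x :=
      (hf.mono (hs.uIcc_subset ha hx)).intervalIntegrable
    have h2 : IntervalIntegrable f volume x u :=
      (hf.mono (hs.uIcc_subset hx hus)).intervalIntegrable
    have hsplit : (∫ t in a..u, f t) = (∫ t in a..x, f t) + ∫ t in x..u, f t :=
      (integral_add_adjacent_intervals h1 h2).symm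
    have hcongr : (∫ t in x..u, f t) = ∫ t in x..u, g t := by
      apply integral_congr
      intro t ht
      rw [uIcc_of_ge hxu] at ht
      have : min x (max t c) = t := by
        rw [max_eq_left ((huc : c ≤ u).trans ht.1), min_eq_right ht.2]
      simp [hg_def, this]
    rw [hsplit, hcongr]
  · push_neg at hd
    exact hasDerivWithinAt_of_subsingleton
      (fun u ⟨hus, hxu⟩ => le_antisymm hxu (hd u hus))

lemma primitive_ordConnected {s : Set ℝ} (hs : s.OrdConnected) {f : ℝ → ℝ}
    (hf : ContinuousOn f s) {a x : ℝ} (ha : a ∈ s) (hx : x ∈ s) :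
    HasDerivWithinAt (fun u => ∫ t in a..u, f t) (f x) s x := by
  have := (primitive_left hs hf ha hx).union (primitive_right hs hf ha hx)
  rwa [← inter_union_distrib_left, Iic_union_Ici, inter_univ] at this

theorem stmt2 {ι : Type*} (I : ι → Set ℝ) (hne : ∀ i, (I i).Nonempty)
    (hconn : ∀ i, IsPreconnected (I i))
    (hdisj : Pairwise fun i j => Disjoint (I i) (I j))
    (D : Set ℝ) (hD : D = ⋃ i, I i)
    (hsep : ∀ i, ∀ p ∈ I i, ∃ U ∈ nhds p, D ∩ U = I i ∩ U)
    (f : ℝ → ℝ) (hf : ContinuousOn f D) :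
    ∃ F : ℝ → ℝ, ∀ x ∈ D, HasDerivWithinAt F (f x) D x := by
  classical
  have hord : ∀ i, (I i).OrdConnected := fun i => (hconn i).ordConnected
  have hsubD : ∀ i, I i ⊆ D := fun i => hD ▸ subset_iUnion I i
  -- choose a base point in each interval
  set a : ι → ℝ := fun i => (hne i).choose with ha_def
  have ha : ∀ i, a i ∈ I i := fun i => (hne i).choose_spec
  -- choose index of each point of D
  have hidx : ∀ x ∈ D, ∃ i, x ∈ I i := by
    intro x hx; rw [hD] at hx; exact mem_iUnion.mp hx
  refine ⟨fun x => if h : x ∈ D then ∫ t in (a (hidx x h).choose)..x, f t else 0, ?_⟩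
  intro x hxD
  set i := (hidx x hxD).choose with hi_def
  have hxi : x ∈ I i := (hidx x hxD).choose_spec
  obtain ⟨U, hU, hDU⟩ := hsep i x hxi
  have hset : D =ᶠ[nhds x] (I i : Set ℝ) := by
    rw [Filter.eventuallyEq_set]
    filter_upwards [hU] with u hu
    constructor
    · intro huD; exact (hDU ▸ (show u ∈ D ∩ U from ⟨huD, hu⟩)).1
    · intro huI; exact ((hDU ▸ (show u ∈ I i ∩ U from ⟨huI, hu⟩)) : u ∈ D ∩ U).1
  have hG : HasDerivWithinAt (fun u => ∫ t in (a i)..u, f t) (f x) D x :=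
    (hasDerivWithinAt_congr_set hset).mpr
      (primitive_ordConnected (hord i) (hf.mono (hsubD i)) (ha i) hxi)
  refine hG.congr_of_eventuallyEq_of_mem ?_ hxD
  filter_upwards [self_mem_nhdsWithin, mem_nhdsWithin_of_mem_nhds hU] with u huD huU
  have huI : u ∈ I i := (hDU ▸ (show u ∈ D ∩ U from ⟨huD, huU⟩)).1
  have hji : (hidx u huD).choose = i := by
    by_contra hne'
    exact (hdisj hne').ne_of_mem (hidx u huD).choose_spec huI rfl
  simp only [dif_pos huD, hji]
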